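/- arXiv:2011.00706 — 5 statements merged into one kernel-verified Lean document; each statement's English description precedes it below -/
import Mathlib

section
/- Let n be even and let π ∈ S_n have maximal strategic pile, i.e. |SP(π)| = n−1. If π(k) = n for some index k, then π(k+1) = 1 (indices read modulo n). -/
/-- The representative of `x : ZMod n` in `{1, …, n}` (so `0` represents `n`). -/
def repr1 (n : ℕ) (x : ZMod n) : ℕ := if x = 0 then n else x.val

/-- Values of `ZMod n`, embedded into `ZMod (n+1)` via representatives in `{1, …, n}`. -/
def emb (n : ℕ) (x : ZMod n) : ZMod (n + 1) := (repr1 n x : ZMod (n + 1))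

/-- `L 0 = 0` and `L i = π(i)` for `i ∈ {1,…,n}`: the listing used to build
the cycle `Y_π = (π(n) π(n−1) … π(1) 0)`. -/
def listFun (n : ℕ) (π : Equiv.Perm (ZMod n)) : ZMod (n + 1) → ZMod (n + 1) :=
  fun i => if i = 0 then 0 else emb n (π (i.val : ZMod n))

/-- The inverse listing of `listFun`. -/
def listInv (n : ℕ) (π : Equiv.Perm (ZMod n)) : ZMod (n + 1) → ZMod (n + 1) :=
  fun y => if y = 0 then 0 else emb n (π.symm (y.val : ZMod n))

/-- The cycle `Y_π = (π(n) π(n−1) … π(1) 0)` on `{0,1,…,n}`, as a function: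
it sends `L(i)` to `L(i-1)`. -/
def Yfun (n : ℕ) (π : Equiv.Perm (ZMod n)) : ZMod (n + 1) → ZMod (n + 1) :=
  fun y => listFun n π (listInv n π y - 1)

/-- `C_π = Y_π ∘ X_n`, where `X_n` is the cycle `(0 1 2 … n)`, i.e. `x ↦ x + 1`. -/
def Cfun (n : ℕ) (π : Equiv.Perm (ZMod n)) : ZMod (n + 1) → ZMod (n + 1) :=
  fun x => Yfun n π (x + 1)

/-- The strategic pile of `π ∈ S_n`: the set of values appearing strictly after `n` and
strictly before `0` on the cycle of `C_π` containing `0` and `n` (empty if `0` and `n`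
lie in different cycles). -/
def strategicPile (n : ℕ) (π : Equiv.Perm (ZMod n)) : Set (ZMod (n + 1)) :=
  {x | ∃ k m : ℕ, 0 < k ∧ k < m ∧ (Cfun n π)^[m] (n : ZMod (n + 1)) = 0 ∧
      (∀ j, 0 < j → j < m → (Cfun n π)^[j] (n : ZMod (n + 1)) ≠ 0) ∧
      (Cfun n π)^[k] (n : ZMod (n + 1)) = x}

/-- `π ∈ S_n` has maximal strategic pile. -/
def MaxPile (n : ℕ) (π : Equiv.Perm (ZMod n)) : Prop :=
  (Even n ∧ (strategicPile n π).ncard = n - 1) ∨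
  (Odd n ∧ (strategicPile n π).ncard = n - 2)

/-- The position (in `{1,…,n}`) of the value `v` in `π`. -/
def idx (n : ℕ) (π : Equiv.Perm (ZMod n)) (v : ZMod n) : ℕ := repr1 n (π.symm v)

/-- Word coordinate of the occurrence of the pointer `(p,p+1)` as the right pointer of the
entry `p`:  the entry at position `i` is given word coordinate `3*i - 1`, its left pointer
coordinate `3*i - 2` and its right pointer coordinate `3*i`. -/
def posR (n : ℕ) (π : Equiv.Perm (ZMod n)) (p : ZMod n) : ℕ := 3 * idx n π p

/-- Word coordinate of the occurrence of the pointer `(p,p+1)` as the left pointer of the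
entry `p+1`. -/
def posL (n : ℕ) (π : Equiv.Perm (ZMod n)) (p : ZMod n) : ℕ := 3 * idx n π (p + 1) - 2

/-- Two pairs of positions interleave (pattern `a b a b` or `b a b a`). -/
def Interleaved (a1 a2 b1 b2 : ℕ) : Prop :=
  (min a1 a2 < min b1 b2 ∧ min b1 b2 < max a1 a2 ∧ max a1 a2 < max b1 b2) ∨
  (min b1 b2 < min a1 a2 ∧ min a1 a2 < max b1 b2 ∧ max b1 b2 < max a1 a2)

/-- `(p, q)` is a valid pointer context for `π`: the two pointers are distinct and their
occurrences in the pointer word of `π` appear in the order `p,q,p,q` or `q,p,q,p`. -/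
def ValidContext (n : ℕ) (π : Equiv.Perm (ZMod n)) (p q : ZMod n) : Prop :=
  p ≠ q ∧ Interleaved (posR n π p) (posL n π p) (posR n π q) (posL n π q)

/-- The number of (unordered) valid pointer contexts of `π`. -/
noncomputable def numContexts (n : ℕ) (π : Equiv.Perm (ZMod n)) : ℕ :=
  {pq : ZMod n × ZMod n | ValidContext n π pq.1 pq.2}.ncard / 2

/-- `ρ ∈ S_{2n−1}` is the contraction of `π ∈ S_{2n}`, obtained by deleting the entry `2n`. -/
def IsContraction (n : ℕ) (ρ : Equiv.Perm (ZMod (2 * n - 1)))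
    (π : Equiv.Perm (ZMod (2 * n))) : Prop :=
  ∃ m : ℕ, 1 ≤ m ∧ m ≤ 2 * n ∧ π (m : ZMod (2 * n)) = ((2 * n : ℕ) : ZMod (2 * n)) ∧
    (∀ k : ℕ, 1 ≤ k → k < m →
      ρ (k : ZMod (2 * n - 1)) =
        ((repr1 (2 * n) (π (k : ZMod (2 * n))) : ℕ) : ZMod (2 * n - 1))) ∧
    (∀ k : ℕ, m ≤ k → k ≤ 2 * n - 1 →
      ρ (k : ZMod (2 * n - 1)) =
        ((repr1 (2 * n) (π ((k + 1 : ℕ) : ZMod (2 * n))) : ℕ) : ZMod (2 * n - 1)))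

/-- `M_{2n}`: the contractions of permutations in `S_{2n}` with maximal strategic pile. -/
def MsetAll (n : ℕ) : Set (Equiv.Perm (ZMod (2 * n - 1))) :=
  {ρ | ∃ π : Equiv.Perm (ZMod (2 * n)), MaxPile (2 * n) π ∧ IsContraction n ρ π}

/-- `M_{2n,k}`: the contractions of permutations in `S_{2n}` with maximal strategic pile
and exactly `k` valid pointer contexts. -/
def Mset (n k : ℕ) : Set (Equiv.Perm (ZMod (2 * n - 1))) :=
  {ρ | ρ ∈ MsetAll n ∧ numContexts (2 * n - 1) ρ = k}

/-- Cyclic shift by `a`: `C_a(π)(x) = π(x - a)`. -/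
def Cshift (n : ℕ) (a : ZMod n) (π : Equiv.Perm (ZMod n)) : Equiv.Perm (ZMod n) :=
  (Equiv.subRight a).trans π

/-- Translation by `b`: `T_b(π)(x) = π(x) + b`. -/
def Tshift (n : ℕ) (b : ZMod n) (π : Equiv.Perm (ZMod n)) : Equiv.Perm (ZMod n) :=
  π.trans (Equiv.addRight b)

/-- `φ(a,b,π) = C_a(T_b(π))`, i.e. `x ↦ π(x-a) + b`. -/
def phiAct (n : ℕ) (a b : ZMod n) (π : Equiv.Perm (ZMod n)) : Equiv.Perm (ZMod n) :=
  Cshift n a (Tshift n b π)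

/-- The difference sequence of `π`. -/
def Dseq (n : ℕ) (π : Equiv.Perm (ZMod n)) : ZMod n → ZMod n :=
  fun k => π (k + 1) - π k

/-- The difference sequence of `π` is periodic with (least) period `p`, `0 < p < n`. -/
def PeriodicWith (n : ℕ) (π : Equiv.Perm (ZMod n)) (p : ℕ) : Prop :=
  0 < p ∧ p < n ∧ (∀ k : ZMod n, Dseq n π (k + (p : ZMod n)) = Dseq n π k) ∧
    ∀ q : ℕ, 0 < q → q < p → ¬ ∀ k : ZMod n, Dseq n π (k + (q : ZMod n)) = Dseq n π k

set_option linter.unusedSectionVars false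

section H
variable {n : ℕ} (hn : 0 < n)
include hn

lemma repr1_pos (x : ZMod n) : 0 < repr1 n x := by
  haveI : NeZero n := ⟨hn.ne'⟩
  unfold repr1; split
  · exact hn
  · exact Nat.pos_of_ne_zero (fun h => ‹x ≠ 0› ((ZMod.val_eq_zero x).mp h))

lemma repr1_le (x : ZMod n) : repr1 n x ≤ n := by
  haveI : NeZero n := ⟨hn.ne'⟩
  unfold repr1; split
  · exact le_rfl
  · exact (ZMod.val_lt x).le

lemma cast_repr1 (x : ZMod n) : ((repr1 n x : ℕ) : ZMod n) = x := by
  haveI : NeZero n := ⟨hn.ne'⟩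
  unfold repr1; split
  · simp [ZMod.natCast_self, *]
  · exact ZMod.natCast_rightInverse x

lemma emb_val (x : ZMod n) : (emb n x).val = repr1 n x :=
  ZMod.val_cast_of_lt (Nat.lt_succ_of_le (repr1_le hn x))

lemma emb_ne_zero (x : ZMod n) : emb n x ≠ 0 := by
  intro h
  have := emb_val hn x
  rw [h, ZMod.val_zero] at this
  exact (repr1_pos hn x).ne this

lemma cast_emb_val (x : ZMod n) : (((emb n x).val : ℕ) : ZMod n) = x := by
  rw [emb_val hn, cast_repr1 hn]

lemma emb_cast_val (x : ZMod (n+1)) (hx : x ≠ 0) :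
    emb n ((x.val : ℕ) : ZMod n) = x := by
  haveI : NeZero n := ⟨hn.ne'⟩
  have hxv : x.val ≠ 0 := fun h => hx ((ZMod.val_eq_zero x).mp h)
  have hxle : x.val ≤ n := Nat.lt_succ_iff.mp (ZMod.val_lt x)
  have hxx : ((x.val : ℕ) : ZMod (n+1)) = x := ZMod.natCast_rightInverse x
  unfold emb repr1
  rcases eq_or_lt_of_le hxle with h | h
  · have : ((x.val : ℕ) : ZMod n) = 0 := by rw [h]; exact ZMod.natCast_self n
    rw [if_pos this, ← hxx, h]
  · have hv : ((x.val : ℕ) : ZMod n).val = x.val := ZMod.val_cast_of_lt h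
    have : ((x.val : ℕ) : ZMod n) ≠ 0 := by
      intro h0; rw [h0, ZMod.val_zero] at hv; exact hxv hv.symm
    rw [if_neg this, hv, hxx]

variable (π : Equiv.Perm (ZMod n))

lemma listInv_listFun (x : ZMod (n+1)) : listInv n π (listFun n π x) = x := by
  unfold listFun
  split
  · unfold listInv; simp [*]
  · unfold listInv
    rw [if_neg (emb_ne_zero hn _), cast_emb_val hn, Equiv.symm_apply_apply,
      emb_cast_val hn x ‹x ≠ 0›]

lemma listFun_listInv (y : ZMod (n+1)) : listFun n π (listInv n π y) = y := by
  unfold listInv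
  split
  · unfold listFun; simp [*]
  · unfold listFun
    rw [if_neg (emb_ne_zero hn _), cast_emb_val hn, Equiv.apply_symm_apply,
      emb_cast_val hn y ‹y ≠ 0›]

lemma Cfun_injective : Function.Injective (Cfun n π) := by
  have : Function.LeftInverse (fun y => listFun n π (listInv n π y + 1) - 1) (Cfun n π) := by
    intro x
    simp only [Cfun, Yfun]
    rw [listInv_listFun hn, sub_add_cancel, listFun_listInv hn]
    ring
  exact this.injective
end H

section M
variable {n : ℕ} (hn : 0 < n) (π : Equiv.Perm (ZMod n))

/-- Key consequence of maximality: `C_π(0) = n`. -/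
lemma C_zero (hn2 : 2 ≤ n) (hmax : (strategicPile n π).ncard = n - 1) :
    Cfun n π 0 = (n : ZMod (n + 1)) := by
  have hn : 0 < n := by omega
  set f := Cfun n π with hf
  set N : ZMod (n + 1) := (n : ZMod (n + 1)) with hN
  have hfinj : Function.Injective f := Cfun_injective hn π
  have hNne : N ≠ 0 := by
    intro h
    have : N.val = 0 := by rw [h, ZMod.val_zero]
    rw [hN, ZMod.val_cast_of_lt (Nat.lt_succ_self n)] at this
    omega
  -- obtain the hitting time m
  have hSPne : (strategicPile n π).Nonempty := by
    apply Set.nonempty_of_ncard_ne_zero; rw [hmax]; omega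
  obtain ⟨x, k0, m, hk0, hk0m, h0, hmin, hx⟩ := hSPne
  have hm2 : 2 ≤ m := by omega
  -- distinctness of the orbit up to m
  have horb : ∀ i j : ℕ, i < j → j ≤ m → f^[i] N ≠ f^[j] N := by
    intro i j hij hjm heq
    have hdec : j = i + (j - i) := by omega
    rw [hdec, Function.iterate_add_apply] at heq
    have hNd : N = f^[j - i] N := Function.Injective.iterate hfinj i heq
    rcases eq_or_lt_of_le hjm with h | h
    · -- if j = m and i = 0 impossible; use m - (j-i)
      rcases Nat.eq_zero_or_pos i with hi | hi
      · subst hi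
        apply hNne
        rw [hNd]
        have hji : j - 0 = m := by omega
        rw [hji]; exact h0
      · have hlt : m - (j - i) < m := by omega
        have hpos : 0 < m - (j - i) := by omega
        have : f^[m - (j - i)] N = 0 := by
          calc f^[m - (j - i)] N = f^[m - (j - i)] (f^[j - i] N) := by rw [← hNd]
            _ = f^[m] N := by rw [← Function.iterate_add_apply]; congr 1; omega
            _ = 0 := h0
        exact hmin _ hpos hlt this
    · have hlt : m - (j - i) < m := by omega
      have hpos : 0 < m - (j - i) := by omega
      have : f^[m - (j - i)] N = 0 := by
        calc f^[m - (j - i)] N = f^[m - (j - i)] (f^[j - i] N) := by rw [← hNd]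
          _ = f^[m] N := by rw [← Function.iterate_add_apply]; congr 1; omega
          _ = 0 := h0
      exact hmin _ hpos hlt this
  -- strategic pile is the image of Ioo 0 m
  have hSP : strategicPile n π = (fun k => f^[k] N) '' (Set.Ioo 0 m) := by
    ext y
    constructor
    · rintro ⟨k', m', hk', hk'm, h0', hmin', rfl⟩
      have hmm : m' = m := by
        rcases lt_trichotomy m' m with h | h | h
        · exact absurd h0' (hmin m' (by omega) h)
        · exact h
        · exact absurd h0 (hmin' m (by omega) h)
      exact ⟨k', ⟨hk', hmm ▸ hk'm⟩, rfl⟩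
    · rintro ⟨k', ⟨h1, h2⟩, rfl⟩
      exact ⟨k', m, h1, h2, h0, hmin, rfl⟩
  -- count
  have hinj : Set.InjOn (fun k => f^[k] N) (Set.Ioo 0 m) := by
    intro i hi j hj heq
    rcases lt_trichotomy i j with h | h | h
    · exact absurd heq (horb i j h hj.2.le)
    · exact h
    · exact absurd heq.symm (horb j i h hi.2.le)
  have hcard : (strategicPile n π).ncard = m - 1 := by
    rw [hSP, Set.ncard_image_of_injOn hinj, ← Finset.coe_Ioo, Set.ncard_coe_finset,
      Nat.card_Ioo]
    omega
  have hmn : m = n := by omega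
  subst hmn
  -- surjectivity of the orbit
  have hsurj : ∀ y : ZMod (m + 1), ∃ k ≤ m, f^[k] N = y := by
    intro y
    have hcard2 : (Finset.image (fun k => f^[k] N) (Finset.range (m + 1))).card = m + 1 := by
      rw [Finset.card_image_of_injOn, Finset.card_range]
      intro i hi j hj heq
      simp only [Finset.coe_range, Set.mem_Iio] at hi hj
      rcases lt_trichotomy i j with h | h | h
      · exact absurd heq (horb i j h (by omega))
      · exact h
      · exact absurd heq.symm (horb j i h (by omega))
    have huniv : Finset.image (fun k => f^[k] N) (Finset.range (m + 1)) = Finset.univ :=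
      Finset.eq_univ_of_card _ (by rw [hcard2, ZMod.card])
    have : y ∈ Finset.image (fun k => f^[k] N) (Finset.range (m + 1)) := by
      rw [huniv]; exact Finset.mem_univ y
    obtain ⟨k, hk, hky⟩ := Finset.mem_image.mp this
    exact ⟨k, by simpa using Nat.lt_succ_iff.mp (Finset.mem_range.mp hk), hky⟩
  obtain ⟨k, hkm, hky⟩ := hsurj (f^[m + 1] N)
  rcases Nat.eq_zero_or_pos k with hk | hk
  · subst hk
    have : f 0 = N := by
      rw [← h0, ← Function.iterate_succ_apply' f m N]
      exact hky.symm ▸ (by simpa using hky)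
    exact this
  · exfalso
    have hkd : k = (k - 1) + 1 := by omega
    rw [hkd, Function.iterate_succ_apply' f (k-1) N,
      Function.iterate_succ_apply' f m N] at hky
    have h01 : f^[k - 1] N = f^[m] N := hfinj hky
    rw [h0] at h01
    rcases Nat.eq_zero_or_pos (k - 1) with h | h
    · rw [h] at h01; exact hNne h01
    · exact hmin _ h (by omega) h01
end M


/-- If `n` is even and `π ∈ S_n` has maximal strategic pile `|SP(π)| = n-1`,
and `π(k) = n`, then `π(k+1) = 1`. -/
theorem stmt0 (n : ℕ) (hn : 0 < n) (hne : Even n) (π : Equiv.Perm (ZMod n))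
    (hmax : (strategicPile n π).ncard = n - 1)
    (k : ZMod n) (hk : π k = (n : ZMod n)) :
    π (k + 1) = 1 := by
  haveI : NeZero n := ⟨hn.ne'⟩
  have hn2 : 2 ≤ n := by
    rcases hne with ⟨r, hr⟩; omega
  have hC0 := C_zero π hn2 hmax
  haveI : Fact (1 < n + 1) := ⟨by omega⟩
  have h1ne : (1 : ZMod (n + 1)) ≠ 0 := by
    intro h
    have := congrArg ZMod.val h
    rw [ZMod.val_one, ZMod.val_zero] at this
    omega
  have hNne : ((n : ZMod (n + 1))) ≠ 0 := by
    intro h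
    have := congrArg ZMod.val h
    rw [ZMod.val_cast_of_lt (Nat.lt_succ_self n), ZMod.val_zero] at this
    omega
  set a : ZMod n := π.symm 1 with ha
  set j : ℕ := repr1 n a with hj
  have hj1 : 1 ≤ j := repr1_pos hn a
  have hjn : j ≤ n := repr1_le hn a
  have hLI : listInv n π 1 = ((j : ℕ) : ZMod (n + 1)) := by
    unfold listInv
    rw [if_neg h1ne, ZMod.val_one]
    show emb n (π.symm ((1 : ℕ) : ZMod n)) = _
    rw [Nat.cast_one]
    rfl
  have hC0' : listFun n π (((j : ℕ) : ZMod (n + 1)) - 1) = (n : ZMod (n + 1)) := by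
    have : Cfun n π 0 = listFun n π (listInv n π 1 - 1) := by
      simp [Cfun, Yfun]
    rw [this, hLI] at hC0
    exact hC0
  -- j ≠ 1
  have hj2 : 2 ≤ j := by
    rcases eq_or_lt_of_le hj1 with h | h
    · exfalso
      apply hNne
      rw [← hC0', ← h]
      unfold listFun
      rw [if_pos]
      simp
    · omega
  have hcast : ((j : ℕ) : ZMod (n + 1)) - 1 = ((j - 1 : ℕ) : ZMod (n + 1)) := by
    have := Nat.cast_sub (R := ZMod (n + 1)) hj1
    rw [this, Nat.cast_one]
  have hvalj : (((j - 1 : ℕ) : ZMod (n + 1))).val = j - 1 :=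
    ZMod.val_cast_of_lt (by omega)
  have hne0 : ((j - 1 : ℕ) : ZMod (n + 1)) ≠ 0 := by
    intro h
    have := congrArg ZMod.val h
    rw [hvalj, ZMod.val_zero] at this
    omega
  have hC0'' : emb n (π ((j - 1 : ℕ) : ZMod n)) = (n : ZMod (n + 1)) := by
    rw [hcast] at hC0'
    unfold listFun at hC0'
    rw [if_neg hne0, hvalj] at hC0'
    exact hC0'
  have hπj : π ((j - 1 : ℕ) : ZMod n) = ((n : ℕ) : ZMod n) := by
    have hv := congrArg ZMod.val hC0''
    rw [emb_val hn, ZMod.val_cast_of_lt (Nat.lt_succ_self n)] at hv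
    rw [ZMod.natCast_self]
    by_contra h
    have : repr1 n (π ((j - 1 : ℕ) : ZMod n)) = (π ((j - 1 : ℕ) : ZMod n)).val := by
      unfold repr1; rw [if_neg h]
    rw [this] at hv
    have := ZMod.val_lt (π ((j - 1 : ℕ) : ZMod n))
    omega
  have hkj : k = ((j - 1 : ℕ) : ZMod n) := π.injective (by rw [hk, hπj])
  have hk1 : k + 1 = ((j : ℕ) : ZMod n) := by
    rw [hkj, ← Nat.cast_one (R := ZMod n), ← Nat.cast_add]
    congr 1
    omega
  rw [hk1, hj, cast_repr1 hn a, ha, Equiv.apply_symm_apply]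
end

section
/- Let π ∈ S_n have difference sequence periodic with period p, and let a, b ∈ Z_n both be nonzero and satisfy C_a(T_b(π)) = π. Then a is an integer multiple of p (i.e. p divides the representative of a). -/
/-- Let `π ∈ S_n` have difference sequence periodic with period `p`, and let
`a, b ∈ Z_n` both be nonzero and satisfy `C_a(T_b(π)) = π`.  Then `p` divides the
representative of `a`. -/
theorem stmt4 (n : ℕ) (hn : 0 < n) (π : Equiv.Perm (ZMod n)) (p : ℕ)
    (hper : PeriodicWith n π p) (a b : ZMod n) (ha : a ≠ 0) (hb : b ≠ 0)
    (heq : Cshift n a (Tshift n b π) = π) :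
    p ∣ a.val := by
  obtain ⟨hp0, hpn, hP, hmin⟩ := hper
  have hshift : ∀ x : ZMod n, π (x - a) + b = π x := by
    intro x
    have := DFunLike.congr_fun heq x
    simpa [Cshift, Tshift, Equiv.subRight, Equiv.addRight] using this
  have hA : ∀ k : ZMod n, Dseq n π (k + a) = Dseq n π k := by
    intro k
    have h1 : π (k + a) = π k + b := by
      have := hshift (k + a); simpa using this.symm
    have h2 : π (k + a + 1) = π (k + 1) + b := by
      have := hshift (k + a + 1)
      rw [show k + a + 1 - a = k + 1 by ring] at this
      exact this.symm
    simp [Dseq, h1, h2]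
  have hmul : ∀ m : ℕ, ∀ k : ZMod n, Dseq n π (k + ((m * p : ℕ) : ZMod n)) = Dseq n π k := by
    intro m
    induction m with
    | zero => simp
    | succ m ih =>
      intro k
      have : ((m + 1) * p : ℕ) = m * p + p := by ring
      rw [this, Nat.cast_add, ← add_assoc]
      rw [hP (k + ((m * p : ℕ) : ZMod n))]
      exact ih k
  set r := a.val % p with hr
  set m := a.val / p with hm
  rcases Nat.eq_zero_or_pos r with h0 | hrpos
  · exact Nat.dvd_of_mod_eq_zero h0
  · exfalso
    apply hmin r hrpos (Nat.mod_lt _ hp0)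
    intro k
    have key : a = ((r : ZMod n)) + ((m * p : ℕ) : ZMod n) := by
      haveI : NeZero n := ⟨hn.ne'⟩
      have : r + m * p = a.val := by rw [hr, hm, Nat.mul_comm]; exact Nat.mod_add_div _ _
      rw [← Nat.cast_add, this, ZMod.natCast_val, ZMod.cast_id]
    calc Dseq n π (k + (r : ZMod n))
        = Dseq n π (k + (r : ZMod n) + ((m * p : ℕ) : ZMod n)) := (hmul m _).symm
      _ = Dseq n π (k + a) := by rw [add_assoc, ← key]
      _ = Dseq n π k := hA k
end

section
/- Let π ∈ M_{2n,k}. Then the stabilizer Stab(π) of π under the action φ′ of Z_{2n−1} × Z_{2n−1} is a cyclic group; moreover, if the difference sequence D_π is periodic with period p, then Stab(π) is generated by the element (p, π(p+1) − π(1)). -/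
section Aux

variable {m : ℕ} [NeZero m] (π : Equiv.Perm (ZMod m))

lemma stab_iff (a b : ZMod m) :
    phiAct m a b π = π ↔ ∀ x, π (x + a) = π x + b := by
  constructor
  · intro h x
    have h' := Equiv.ext_iff.mp h (x + a)
    have : phiAct m a b π (x + a) = π (x + a - a) + b := rfl
    rw [this, add_sub_cancel_right] at h'
    exact h'.symm
  · intro h
    ext x
    have : phiAct m a b π x = π (x - a) + b := rfl
    rw [this, ← h (x - a), sub_add_cancel]

/-- The subgroup of "periods" of the difference sequence. -/
def paS : AddSubgroup (ZMod m) where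
  carrier := {a | ∀ k, Dseq m π (k + a) = Dseq m π k}
  zero_mem' := by intro k; rw [add_zero]
  add_mem' := by
    intro a b ha hb k
    have : k + (a + b) = (k + b) + a := by ring
    rw [this, ha (k + b), hb k]
  neg_mem' := by
    intro a ha k
    have h := ha (k + -a)
    have : k + -a + a = k := by ring
    rw [this] at h
    exact h.symm

lemma mem_paS (a : ZMod m) :
    a ∈ paS π ↔ ∀ k, Dseq m π (k + a) = Dseq m π k := Iff.rfl

lemma const_of_step (f : ZMod m → ZMod m) (h : ∀ x, f (x + 1) = f x) (x y : ZMod m) :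
    f x = f y := by
  have key : ∀ t : ℕ, ∀ z : ZMod m, f (z + (t : ZMod m)) = f z := by
    intro t
    induction t with
    | zero => intro z; simp
    | succ t ih =>
      intro z
      have e : z + ((t + 1 : ℕ) : ZMod m) = (z + (t : ZMod m)) + 1 := by push_cast; ring
      rw [e, h, ih]
  have e : x = y + (((x - y).val : ℕ) : ZMod m) := by
    rw [ZMod.natCast_val, ZMod.cast_id]; ring
  rw [e, key]

lemma char (a b : ZMod m) :
    phiAct m a b π = π ↔ a ∈ paS π ∧ b = π (a + 1) - π 1 := by
  rw [stab_iff]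
  constructor
  · intro h
    constructor
    · intro k
      have e1 : k + a + 1 = (k + 1) + a := by ring
      simp only [Dseq, e1, h (k + 1), h k]
      ring
    · have h1 := h 1
      rw [add_comm a 1, h1]; ring
  · rintro ⟨hP, hb⟩ x
    have step : ∀ z : ZMod m, (fun w => π (w + a) - π w) (z + 1) = (fun w => π (w + a) - π w) z := by
      intro z
      have h1 := hP z
      simp only [Dseq] at h1
      have e1 : z + 1 + a = z + a + 1 := by ring
      simp only [e1]
      have : π (z + a + 1) - π (z + a) = π (z + 1) - π z := h1
      linear_combination this
    have hconst : π (x + a) - π x = π (1 + a) - π 1 :=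
      const_of_step (fun w => π (w + a) - π w) step x 1
    have e2 : (1 : ZMod m) + a = a + 1 := by ring
    rw [e2] at hconst
    rw [hb]
    linear_combination hconst

/-- The stabilizer as a subgroup. -/
def stabS : AddSubgroup (ZMod m × ZMod m) where
  carrier := {x | phiAct m x.1 x.2 π = π}
  zero_mem' := by
    show phiAct m (0 : ZMod m × ZMod m).1 (0 : ZMod m × ZMod m).2 π = π
    rw [stab_iff]; intro x; simp
  add_mem' := by
    intro x y hx hy
    have hx' := (stab_iff π x.1 x.2).mp hx
    have hy' := (stab_iff π y.1 y.2).mp hy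
    show phiAct m (x + y).1 (x + y).2 π = π
    rw [stab_iff]
    intro z
    have e : z + (x + y).1 = (z + y.1) + x.1 := by
      simp only [Prod.fst_add]; ring
    rw [e, hx' (z + y.1), hy' z]
    simp only [Prod.snd_add]; ring
  neg_mem' := by
    intro x hx
    have hx' := (stab_iff π x.1 x.2).mp hx
    show phiAct m (-x).1 (-x).2 π = π
    rw [stab_iff]
    intro z
    have h := hx' (z + (-x).1)
    have e : z + (-x).1 + x.1 = z := by simp only [Prod.fst_neg]; ring
    rw [e] at h
    rw [h]
    simp only [Prod.snd_neg]; ring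

lemma mem_stabS (x : ZMod m × ZMod m) :
    x ∈ stabS π ↔ phiAct m x.1 x.2 π = π := Iff.rfl

lemma val_cast_self (a : ZMod m) : ((a.val : ℕ) : ZMod m) = a := by
  rw [ZMod.natCast_val, ZMod.cast_id]

lemma gcd_mem (a : ZMod m) (p : ℕ) (ha : a ∈ paS π) (hp : (p : ZMod m) ∈ paS π) :
    ((Nat.gcd (Nat.gcd a.val p) m : ℕ) : ZMod m) ∈ paS π := by
  set d1 := Nat.gcd a.val p with hd1
  have hb1 : (d1 : ZMod m) = ((Nat.gcdA a.val p : ℤ) : ZMod m) * a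
      + ((Nat.gcdB a.val p : ℤ) : ZMod m) * (p : ZMod m) := by
    have hB := Nat.gcd_eq_gcd_ab a.val p
    have : ((d1 : ℤ) : ZMod m)
        = (((a.val : ℤ) * Nat.gcdA a.val p + (p : ℤ) * Nat.gcdB a.val p : ℤ) : ZMod m) := by
      rw [hd1, ← hB]
    push_cast at this
    rw [val_cast_self] at this
    rw [this]; ring
  have hd1mem : (d1 : ZMod m) ∈ paS π := by
    rw [hb1]
    have h1 : (Nat.gcdA a.val p) • a ∈ paS π := AddSubgroup.zsmul_mem _ ha _
    have h2 : (Nat.gcdB a.val p) • (p : ZMod m) ∈ paS π := AddSubgroup.zsmul_mem _ hp _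
    rw [zsmul_eq_mul] at h1 h2
    exact add_mem h1 h2
  have hb2 : ((Nat.gcd d1 m : ℕ) : ZMod m)
      = ((Nat.gcdA d1 m : ℤ) : ZMod m) * (d1 : ZMod m) := by
    have hB := Nat.gcd_eq_gcd_ab d1 m
    have : ((Nat.gcd d1 m : ℤ) : ZMod m)
        = (((d1 : ℤ) * Nat.gcdA d1 m + (m : ℤ) * Nat.gcdB d1 m : ℤ) : ZMod m) := by
      rw [← hB]
    push_cast at this
    rw [ZMod.natCast_self] at this
    rw [this]; ring
  rw [hb2]
  have h1 : (Nat.gcdA d1 m) • ((d1 : ℕ) : ZMod m) ∈ paS π := AddSubgroup.zsmul_mem _ hd1mem _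
  rw [zsmul_eq_mul] at h1
  exact h1

lemma core (p : ℕ) (hp0 : 0 < p) (hPp : (p : ZMod m) ∈ paS π)
    (hmin : ∀ q : ℕ, 0 < q → q < p → ¬ ((q : ZMod m) ∈ paS π)) :
    ∀ a ∈ paS π, a ∈ AddSubgroup.zmultiples ((p : ZMod m)) := by
  intro a ha
  set d1 := Nat.gcd a.val p with hd1
  set d := Nat.gcd d1 m with hd
  have hdmem : ((d : ℕ) : ZMod m) ∈ paS π := gcd_mem π a p ha hPp
  have hdpos : 0 < d := Nat.gcd_pos_of_pos_right _ (Nat.pos_of_ne_zero (NeZero.ne m))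
  have hd1p : d1 ∣ p := Nat.gcd_dvd_right _ _
  have hdp : d ∣ p := (Nat.gcd_dvd_left d1 m).trans hd1p
  have hdle : d ≤ p := Nat.le_of_dvd hp0 hdp
  have hdeq : d = p := by
    by_contra hne
    exact hmin d hdpos (lt_of_le_of_ne hdle hne) hdmem
  have hpd1 : p ∣ d1 := hdeq ▸ Nat.gcd_dvd_left d1 m
  have hpa : p ∣ a.val := hpd1.trans (Nat.gcd_dvd_left _ _)
  refine AddSubgroup.mem_zmultiples_iff.mpr ⟨(a.val / p : ℕ), ?_⟩
  rw [zsmul_eq_mul, Int.cast_natCast, ← Nat.cast_mul, Nat.div_mul_cancel hpa, val_cast_self]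

lemma gen (g : ZMod m) (hg : g ∈ paS π)
    (hall : ∀ a ∈ paS π, a ∈ AddSubgroup.zmultiples g) :
    ∀ x : ZMod m × ZMod m,
      phiAct m x.1 x.2 π = π ↔ x ∈ AddSubgroup.zmultiples ((g, π (g + 1) - π 1)) := by
  intro x
  have hgen : ((g, π (g + 1) - π 1) : ZMod m × ZMod m) ∈ stabS π :=
    (mem_stabS π _).mpr ((char π g (π (g + 1) - π 1)).mpr ⟨hg, rfl⟩)
  constructor
  · intro hx
    obtain ⟨hPa, hb⟩ := (char π x.1 x.2).mp hx
    obtain ⟨t, ht⟩ := AddSubgroup.mem_zmultiples_iff.mp (hall x.1 hPa)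
    refine AddSubgroup.mem_zmultiples_iff.mpr ⟨t, ?_⟩
    have hmem : t • ((g, π (g + 1) - π 1) : ZMod m × ZMod m) ∈ stabS π :=
      AddSubgroup.zsmul_mem _ hgen t
    rw [mem_stabS] at hmem
    obtain ⟨hPa', hb'⟩ := (char π _ _).mp hmem
    have h1 : (t • ((g, π (g + 1) - π 1) : ZMod m × ZMod m)).1 = x.1 := by
      rw [Prod.smul_fst]; exact ht
    have h2 : (t • ((g, π (g + 1) - π 1) : ZMod m × ZMod m)).2 = x.2 := by
      rw [hb', h1, hb]
    exact Prod.ext h1 h2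
  · intro hx
    obtain ⟨t, ht⟩ := AddSubgroup.mem_zmultiples_iff.mp hx
    have hmem : t • ((g, π (g + 1) - π 1) : ZMod m × ZMod m) ∈ stabS π :=
      AddSubgroup.zsmul_mem _ hgen t
    rw [ht] at hmem
    exact (mem_stabS π x).mp hmem

end Aux

/-- For `π ∈ M_{2n,k}`, the stabilizer of `π` under the
`Z_{2n-1} × Z_{2n-1}`-action `φ` is cyclic; moreover, if `D_π` is periodic with period `p`,
it is generated by `(p, π(p+1) - π(1))`. -/
theorem stmt5 (n k : ℕ) (hn : 0 < n) (π : Equiv.Perm (ZMod (2 * n - 1)))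
    (hπ : π ∈ Mset n k) :
    (∃ g : ZMod (2 * n - 1) × ZMod (2 * n - 1),
      ∀ x : ZMod (2 * n - 1) × ZMod (2 * n - 1),
        phiAct (2 * n - 1) x.1 x.2 π = π ↔ x ∈ AddSubgroup.zmultiples g) ∧
    (∀ p : ℕ, PeriodicWith (2 * n - 1) π p →
      ∀ x : ZMod (2 * n - 1) × ZMod (2 * n - 1),
        phiAct (2 * n - 1) x.1 x.2 π = π ↔
          x ∈ AddSubgroup.zmultiples
            (((p : ZMod (2 * n - 1)), π ((p : ZMod (2 * n - 1)) + 1) - π 1))) := by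
  haveI : NeZero (2 * n - 1) := ⟨by omega⟩
  constructor
  · by_cases h : ∀ a ∈ paS π, a = (0 : ZMod (2 * n - 1))
    · exact ⟨_, gen π 0 (zero_mem _) (fun a ha => by rw [h a ha]; exact zero_mem _)⟩
    · push_neg at h
      obtain ⟨a, ha, ha0⟩ := h
      have hex : ∃ q : ℕ, 0 < q ∧ ((q : ZMod (2 * n - 1)) : ZMod (2 * n - 1)) ∈ paS π := by
        refine ⟨a.val, ?_, ?_⟩
        · exact Nat.pos_of_ne_zero (fun hv => ha0 ((ZMod.val_eq_zero a).mp hv))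
        · rw [val_cast_self a]; exact ha
      classical
      obtain ⟨hp0, hPp⟩ := Nat.find_spec hex
      refine ⟨_, gen π _ hPp (core π (Nat.find hex) hp0 hPp ?_)⟩
      intro q hq0 hqlt hqmem
      exact Nat.find_min hex hqlt ⟨hq0, hqmem⟩
  · intro p hper x
    obtain ⟨hp0, hpm, hPp, hmin⟩ := hper
    exact gen π ((p : ZMod (2 * n - 1))) hPp
      (core π p hp0 hPp (fun q hq0 hqlt hqmem => hmin q hq0 hqlt hqmem)) x
end

section
/- Let π ∈ S_n, let p be a divisor of n, and suppose the difference sequence of π is periodic with a period dividing p. Then π(i) ≡ π(i+p) (mod p) for all i (indices read modulo n). -/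
/-- Let `π ∈ S_n`, let `p ∣ n`, and suppose the difference sequence of `π`
is periodic with a period dividing `p`.  Then `π(i) ≡ π(i+p) (mod p)` for all `i`. -/
theorem stmt8 (n p : ℕ) (hn : 0 < n) (hp : 0 < p) (hdvd : p ∣ n)
    (π : Equiv.Perm (ZMod n))
    (hper : ∀ k : ZMod n, Dseq n π (k + (p : ZMod n)) = Dseq n π k) :
    ∀ i : ZMod n,
      ((repr1 n (π i) : ℕ) : ZMod p) = ((repr1 n (π (i + (p : ZMod n))) : ℕ) : ZMod p) := by
  haveI : NeZero n := ⟨hn.ne'⟩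
  set c : ZMod n := π ((p : ZMod n)) - π 0 with hc
  have hstep : ∀ k : ZMod n, π (k + 1 + p) - π (k + 1) = π (k + p) - π k := by
    intro k
    have h := hper k
    simp only [Dseq] at h
    have h2 : k + 1 + (p : ZMod n) = k + (p : ZMod n) + 1 := by ring
    rw [h2]
    linear_combination h
  have hfn : ∀ m : ℕ, π ((m : ZMod n) + p) - π (m : ZMod n) = c := by
    intro m
    induction m with
    | zero => simp [hc]
    | succ m ih =>
      push_cast
      rw [hstep (m : ZMod n)]
      exact ih
  have hf : ∀ k : ZMod n, π (k + p) - π k = c := by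
    intro k
    obtain ⟨m, rfl⟩ := ZMod.natCast_zmod_surjective (n := n) k
    exact hfn m
  have hsum : ∀ m : ℕ, π ((m * p : ℕ) : ZMod n) = π 0 + m • c := by
    intro m
    induction m with
    | zero => simp
    | succ m ih =>
      have : ((m + 1) * p : ℕ) = m * p + p := by ring
      rw [this]
      push_cast
      have := hf ((m * p : ℕ) : ZMod n)
      push_cast at this
      have h3 : π ((m : ZMod n) * p + p) = π ((m : ZMod n) * p) + c := by
        linear_combination this
      rw [h3]
      push_cast at ih
      rw [ih]
      rw [add_smul, one_smul, add_assoc]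
  have hzero : ((n / p : ℕ) : ZMod n) * c = 0 := by
    have h1 := hsum (n / p)
    rw [Nat.div_mul_cancel hdvd] at h1
    simp only [ZMod.natCast_self] at h1
    have : (n / p : ℕ) • c = 0 := by
      have := h1.symm
      rwa [add_eq_left] at this
    rwa [nsmul_eq_mul] at this
  have hcv : p ∣ c.val := by
    have hcval : ((c.val : ℕ) : ZMod n) = c := by
      simp [ZMod.natCast_val, ZMod.cast_id]
    have : (((n / p) * c.val : ℕ) : ZMod n) = 0 := by
      push_cast
      rw [hcval]
      exact hzero
    have hdvd2 : n ∣ (n / p) * c.val := (ZMod.natCast_eq_zero_iff _ _).mp this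
    have hnp : 0 < n / p := Nat.div_pos (Nat.le_of_dvd hn hdvd) hp
    have hn' : n = (n / p) * p := (Nat.div_mul_cancel hdvd).symm
    have hdvd3 : n / p * p ∣ n / p * c.val := by
      rw [Nat.div_mul_cancel hdvd]; exact hdvd2
    exact (mul_dvd_mul_iff_left hnp.ne').mp hdvd3
  -- reduce repr1 to val mod p
  have hrepr : ∀ x : ZMod n, ((repr1 n x : ℕ) : ZMod p) = ((x.val : ℕ) : ZMod p) := by
    intro x
    unfold repr1
    split
    · next h =>
      subst h
      simp [(ZMod.natCast_eq_zero_iff n p).mpr hdvd]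
    · rfl
  intro i
  rw [hrepr, hrepr]
  haveI : NeZero p := ⟨hp.ne'⟩
  have key : π (i + p) = π i + c := by linear_combination hf i
  have hval : ∀ x : ZMod n, ((x.val : ℕ) : ZMod p) = ZMod.castHom hdvd (ZMod p) x := by
    intro x
    rw [ZMod.castHom_apply, ZMod.natCast_val]
  rw [hval, hval, key, map_add]
  have : (ZMod.castHom hdvd (ZMod p)) c = 0 := by
    rw [← hval]
    exact (ZMod.natCast_eq_zero_iff _ _).mpr hcv
  rw [this, add_zero]
end

section
/- Let π ∈ S_n, let p be a divisor of n, and suppose the difference sequence of π is periodic with a period dividing p. Then the map π_p : Z_p → Z_p determined by π_p(i) ≡ π(i) (mod p) is well defined and is a permutation of Z_p. -/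
/-- Let `π ∈ S_n`, let `p ∣ n`, and suppose the difference sequence of `π`
is periodic with a period dividing `p`.  Then the map `π_p : Z_p → Z_p` determined by
`π_p(i) ≡ π(i) (mod p)` is well defined and is a permutation of `Z_p`. -/
theorem stmt9 (n p : ℕ) (hn : 0 < n) (hp : 0 < p) (hdvd : p ∣ n)
    (π : Equiv.Perm (ZMod n))
    (hper : ∀ k : ZMod n, Dseq n π (k + (p : ZMod n)) = Dseq n π k) :
    ∃ f : ZMod p → ZMod p, Function.Bijective f ∧
      ∀ i : ZMod n, f ((repr1 n i : ℕ) : ZMod p) = ((repr1 n (π i) : ℕ) : ZMod p) := by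
  haveI : NeZero n := ⟨hn.ne'⟩
  haveI : NeZero p := ⟨hp.ne'⟩
  have hrepr : ∀ x : ZMod n,
      ((repr1 n x : ℕ) : ZMod p) = ZMod.castHom hdvd (ZMod p) x := by
    intro x
    unfold repr1
    split
    · next h =>
      subst h
      simp [(ZMod.natCast_eq_zero_iff n p).mpr hdvd]
    · rw [ZMod.castHom_apply, ZMod.natCast_val]
  set cst := ZMod.castHom hdvd (ZMod p) with hcst
  set c : ZMod n := π ((p : ZMod n)) - π 0 with hc
  have h1 : ∀ k : ZMod n, π (k + 1 + (p : ZMod n)) - π (k + 1) = π (k + (p : ZMod n)) - π k := by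
    intro k
    have h2 : π (k + (p : ZMod n) + 1) - π (k + (p : ZMod n)) = π (k + 1) - π k := hper k
    have h3 : k + 1 + (p : ZMod n) = k + (p : ZMod n) + 1 := by ring
    rw [h3]
    linear_combination h2
  have hconstN : ∀ m : ℕ, π ((m : ZMod n) + (p : ZMod n)) - π ((m : ZMod n)) = c := by
    intro m
    induction m with
    | zero => simpa using hc.symm
    | succ m ih =>
      push_cast
      rw [h1 (m : ZMod n)]
      exact ih
  have hconst : ∀ k : ZMod n, π (k + (p : ZMod n)) = π k + c := by
    intro k
    have h := hconstN k.val
    rw [ZMod.natCast_val, ZMod.cast_id] at h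
    linear_combination h
  have hmult : ∀ (k : ZMod n) (m : ℕ), π (k + (m : ℕ) * (p : ZMod n)) = π k + (m : ZMod n) * c := by
    intro k m
    induction m with
    | zero => simp
    | succ m ih =>
      push_cast
      have : k + ((m : ZMod n) + 1) * (p : ZMod n) = (k + (m : ℕ) * (p : ZMod n)) + (p : ZMod n) := by
        push_cast; ring
      rw [this, hconst, ih]
      push_cast; ring
  -- p divides c.val
  have hcc : cst c = 0 := by
    obtain ⟨m, hm⟩ := hdvd
    have h := hmult 0 m
    have hmp : ((m : ℕ) : ZMod n) * ((p : ℕ) : ZMod n) = 0 := by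
      have : (((m * p : ℕ)) : ZMod n) = 0 := by
        rw [mul_comm m p, ← hm]; exact ZMod.natCast_self n
      push_cast at this
      linear_combination this
    rw [zero_add, hmp] at h
    have h0 : ((m : ℕ) : ZMod n) * c = 0 := by linear_combination -h
    -- n ∣ m * c.val
    have h2 : (((m * c.val : ℕ)) : ZMod n) = 0 := by push_cast; rw [ZMod.natCast_val, ZMod.cast_id]; exact h0
    rw [ZMod.natCast_eq_zero_iff] at h2
    have hm0 : 0 < m := by
      rcases Nat.eq_zero_or_pos m with h | h
      · exfalso; rw [h, mul_zero] at hm; exact hn.ne' hm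
      · exact h
    have hdvd2 : p ∣ c.val := by
      rcases h2 with ⟨t, ht⟩
      have ht' : m * c.val = m * (p * t) := by rw [ht, hm]; ring
      exact ⟨t, Nat.eq_of_mul_eq_mul_left hm0 ht'⟩
    rw [hcst, ZMod.castHom_apply, ← ZMod.natCast_val]
    exact (ZMod.natCast_eq_zero_iff _ _).mpr hdvd2
  -- key invariance: cst i = cst j → cst (π i) = cst (π j)
  have hkey : ∀ i j : ZMod n, cst i = cst j → cst (π i) = cst (π j) := by
    intro i j hij
    have hker : cst (j - i) = 0 := by rw [map_sub, hij, sub_self]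
    have hpd : p ∣ (j - i).val := by
      rw [hcst, ZMod.castHom_apply, ← ZMod.natCast_val,
        ZMod.natCast_eq_zero_iff] at hker
      exact hker
    obtain ⟨t, ht⟩ := hpd
    have hji : j = i + (t : ℕ) * (p : ZMod n) := by
      have : ((j - i).val : ZMod n) = j - i := by rw [ZMod.natCast_val, ZMod.cast_id]
      rw [ht] at this
      push_cast at this
      linear_combination -this
    rw [hji, hmult]
    rw [map_add, map_mul, hcc, mul_zero, add_zero]
  have hfc : ∀ i : ZMod n, cst (π ((((cst i).val : ℕ)) : ZMod n)) = cst (π i) := by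
    intro i
    apply hkey
    rw [map_natCast, ZMod.natCast_val, ZMod.cast_id]
  refine ⟨fun x => cst (π ((x.val : ℕ) : ZMod n)), ?_, ?_⟩
  · rw [← Finite.surjective_iff_bijective]
    intro y
    refine ⟨cst (π.symm ((y.val : ℕ) : ZMod n)), ?_⟩
    show cst (π _) = y
    rw [hfc (π.symm ((y.val : ℕ) : ZMod n)), Equiv.apply_symm_apply, map_natCast,
      ZMod.natCast_val, ZMod.cast_id]
  · intro i
    rw [hrepr, hrepr]
    exact hfc i
end
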